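/- Let (X,⊥) be a homogeneously transitive orthoset and let e₁,…,e_k and f₁,…,f_k be two k-tuples of elements of X, each consisting of mutually orthogonal elements. Then there is an automorphism φ of (X,⊥) such that φ(eᵢ) = fᵢ for i = 1,…,k and φ(x) = x for every x ∈ X orthogonal to all of e₁,…,e_k, f₁,…,f_k. -/
import Mathlib


/-- An automorphism of the orthoset `(X, perp)`. -/
def IsOrthoAuto {X : Type*} (perp : X → X → Prop) (φ : Equiv.Perm X) : Prop :=
  ∀ p q : X, perp p q ↔ perp (φ p) (φ q)

/-- The group `G_{ef}`. -/
def Gef {X : Type*} (perp : X → X → Prop) (e f : X) : Set (Equiv.Perm X) :=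
  {φ | IsOrthoAuto perp φ ∧ ∀ x : X, perp x e → perp x f → φ x = x}

/-- Homogeneous transitivity: (HT1) and (HT2). -/
def HomTrans {X : Type*} (perp : X → X → Prop) : Prop :=
  ∀ e f : X, e ≠ f →
    (∃ φ ∈ Gef perp e f, φ e = f) ∧
    (∀ e' f' : X, e' ≠ f' → ∃ τ : Equiv.Perm X, IsOrthoAuto perp τ ∧ τ e = e' ∧
      Gef perp e f = (fun φ => τ⁻¹ * φ * τ) '' Gef perp e' f')

theorem stmt_12 {X : Type*} [Nonempty X] (perp : X → X → Prop)
    (hsymm : ∀ x y : X, perp x y → perp y x)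
    (hirr : ∀ x : X, ¬ perp x x)
    (hht : HomTrans perp)
    (k : ℕ) (e f : Fin k → X)
    (he : ∀ i j : Fin k, i ≠ j → perp (e i) (e j))
    (hf : ∀ i j : Fin k, i ≠ j → perp (f i) (f j)) :
    ∃ φ : Equiv.Perm X, IsOrthoAuto perp φ ∧
      (∀ i : Fin k, φ (e i) = f i) ∧
      (∀ x : X, (∀ i : Fin k, perp x (e i)) → (∀ i : Fin k, perp x (f i)) →
        φ x = x) := by
  induction k with
  | zero =>
    exact ⟨1, fun p q => Iff.rfl, fun i => i.elim0, fun x _ _ => rfl⟩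
  | succ n ih =>
    -- a first automorphism sending e 0 to f 0, fixing everything ⊥ to both
    obtain ⟨φ₁, h1a, h1fix, h1e⟩ :
        ∃ φ₁ : Equiv.Perm X, IsOrthoAuto perp φ₁ ∧
          (∀ x, perp x (e 0) → perp x (f 0) → φ₁ x = x) ∧ φ₁ (e 0) = f 0 := by
      by_cases h : e 0 = f 0
      · exact ⟨1, fun p q => Iff.rfl, fun x _ _ => rfl, h⟩
      · obtain ⟨φ, hφ, hφe⟩ := (hht _ _ h).1
        exact ⟨φ, hφ.1, hφ.2, hφe⟩
    set e' : Fin n → X := fun i => φ₁ (e i.succ) with he'def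
    have he' : ∀ i j : Fin n, i ≠ j → perp (e' i) (e' j) := fun i j hij =>
      (h1a _ _).mp (he _ _ (fun h => hij (Fin.succ_injective n h)))
    have hf' : ∀ i j : Fin n, i ≠ j → perp (f i.succ) (f j.succ) := fun i j hij =>
      hf _ _ (fun h => hij (Fin.succ_injective n h))
    obtain ⟨φ₂, h2a, h2e, h2fix⟩ := ih e' (fun i => f i.succ) he' hf'
    refine ⟨φ₂ * φ₁, ?_, ?_, ?_⟩
    · intro p q
      have : (φ₂ * φ₁) p = φ₂ (φ₁ p) := rfl
      exact (h1a p q).trans (h2a _ _)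
    · intro i
      refine Fin.cases ?_ ?_ i
      · show φ₂ (φ₁ (e 0)) = f 0
        rw [h1e]
        refine h2fix (f 0) (fun j => ?_) (fun j => ?_)
        · have := (h1a (e 0) (e j.succ)).mp (he 0 j.succ (Fin.succ_ne_zero j).symm)
          rwa [h1e] at this
        · exact hf 0 j.succ (Fin.succ_ne_zero j).symm
      · intro i
        show φ₂ (φ₁ (e i.succ)) = f i.succ
        exact h2e i
    · intro x hx1 hx2
      have hfx1 : φ₁ x = x := h1fix x (hx1 0) (hx2 0)
      show φ₂ (φ₁ x) = x
      rw [hfx1]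
      refine h2fix x (fun i => ?_) (fun i => hx2 i.succ)
      have := (h1a x (e i.succ)).mp (hx1 i.succ)
      rwa [hfx1] at this
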